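/- Let p ≥ 1 and n ≥ 2^{3p+2}·p² + p + 1. The maximum size of a family 𝓕 ⊆ 2^[n] such that |A∩B| + |B∩C| + |C∩A| ≥ 3n − 6p for all A, B, C ∈ 𝓕 equals Σ_{i=0}^{p} C(n,i) (achieved by the complements of all sets of size ≤ p, i.e., all sets of size ≥ n − p). -/

import Mathlib

/-- `d A B C = |A∩B| + |B∩C| + |C∩A|`. -/
def dd (A B C : Finset ℕ) : ℕ := (A ∩ B).card + (B ∩ C).card + (C ∩ A).card

open Finset

lemma chooseMono (n : ℕ) : ∀ b, ∀ a ≤ b, 2 * b ≤ n → n.choose a ≤ n.choose b := by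
  intro b
  induction b with
  | zero => intro a ha _; have : a = 0 := by omega
            subst this; exact le_refl _
  | succ b ih =>
    intro a ha hb
    rcases Nat.lt_or_ge a (b+1) with h | h
    · have h1 : n.choose a ≤ n.choose b := ih a (by omega) (by omega)
      have h2 : n.choose b ≤ n.choose (b+1) := by
        apply Nat.choose_le_succ_of_lt_half_left
        have : b + 1 ≤ n / 2 := (Nat.le_div_iff_mul_le (by norm_num)).2 (by omega)
        omega
      omega
    · have : a = b + 1 := by omega
      subst this; exact le_refl _

lemma cardFilterLe (n m : ℕ) :
    (((Finset.Icc 1 n).powerset.filter (fun s => s.card ≤ m)).card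
      = ∑ i ∈ Finset.range (m+1), n.choose i) := by
  have h1 : ((Finset.Icc 1 n).powerset.filter (fun s => s.card ≤ m))
      = (Finset.range (m+1)).biUnion (fun i => Finset.powersetCard i (Finset.Icc 1 n)) := by
    ext s
    simp only [mem_filter, mem_powerset, mem_biUnion, mem_range, mem_powersetCard]
    constructor
    · rintro ⟨h1, h2⟩; exact ⟨s.card, by omega, h1, rfl⟩
    · rintro ⟨i, hi, hs, rfl⟩; exact ⟨hs, by omega⟩
  rw [h1, card_biUnion]
  · apply Finset.sum_congr rfl
    intro i _
    rw [card_powersetCard, Nat.card_Icc]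
    norm_num
  · intro i _ j _ hij
    apply Finset.disjoint_left.2
    intro a ha hb
    simp only [mem_powersetCard] at ha hb
    omega

lemma upperGlem (n p : ℕ) (hp : 1 ≤ p) (hn : 2 ^ (3 * p + 2) * p ^ 2 + p + 1 ≤ n)
    (G : Finset (Finset ℕ)) (hsub : ∀ g ∈ G, g ⊆ Finset.Icc 1 n)
    (hcond : ∀ g ∈ G, ∀ h ∈ G, ∀ k ∈ G,
      (g ∪ h).card + (h ∪ k).card + (k ∪ g).card ≤ 6 * p) :
    G.card ≤ ∑ i ∈ Finset.range (p + 1), n.choose i := by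
  by_cases hall : ∀ g ∈ G, g.card ≤ p
  · rw [← cardFilterLe n p]
    apply card_le_card
    intro g hg
    simp only [mem_filter, mem_powerset]
    exact ⟨hsub g hg, hall g hg⟩
  · push_neg at hall
    obtain ⟨gw, hgw, hgwcard⟩ := hall
    have hne : G.Nonempty := ⟨gw, hgw⟩
    obtain ⟨g0, hg0, hg0max⟩ := G.exists_max_image (fun g => g.card) hne
    obtain ⟨hst, hhst, hstmax⟩ := G.exists_max_image (fun g => (g \ g0).card) hne
    set s := g0.card with hs
    set t := (hst \ g0).card with ht
    set W := g0 ∪ hst with hWdef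
    have hps : p + 1 ≤ s := by
      have := hg0max gw hgw
      omega
    have hs2p : s ≤ 2 * p := by
      have := hcond g0 hg0 g0 hg0 g0 hg0
      simp only [union_self] at this
      omega
    have hWcard : W.card = s + t := by
      have := Finset.card_sdiff_add_card hst g0
      rw [hWdef, union_comm]
      omega
    have hg0hst : (g0 ∪ hst).card = s + t := by
      rw [union_comm]
      have := Finset.card_sdiff_add_card hst g0
      omega
    have h2s3t : 2 * s + 3 * t ≤ 6 * p := by
      have hc := hcond g0 hg0 hst hhst hst hhst
      rw [union_self] at hc
      rw [hg0hst, union_comm hst g0, hg0hst] at hc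
      have hth : t ≤ hst.card := card_le_card sdiff_subset
      omega
    have hW3p : W.card ≤ 3 * p := by omega
    have hres : ∀ k ∈ G, (k \ W).card + 1 ≤ p := by
      intro k hk
      have h1 : (k \ W).card ≤ (k \ g0).card :=
        card_le_card (sdiff_subset_sdiff (Finset.Subset.refl k) subset_union_left)
      have h2 : (k \ g0).card ≤ t := hstmax k hk
      have h3 := hcond g0 hg0 hst hhst k hk
      have h4 : (k ∪ g0).card = s + (k \ g0).card := by
        rw [union_comm]
        have := Finset.card_sdiff_add_card k g0
        rw [union_comm] at this
        omega
      have h5 : t + (k \ W).card ≤ (hst ∪ k).card := by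
        have hdisj : Disjoint (hst \ g0) (k \ W) := by
          rw [Finset.disjoint_left]
          intro x hx hx2
          simp only [mem_sdiff, hWdef, mem_union] at hx hx2
          exact hx2.2 (Or.inr hx.1)
        have hsub2 : (hst \ g0) ∪ (k \ W) ⊆ hst ∪ k :=
          union_subset_union sdiff_subset sdiff_subset
        calc t + (k \ W).card = ((hst \ g0) ∪ (k \ W)).card :=
              (card_union_of_disjoint hdisj).symm
          _ ≤ (hst ∪ k).card := card_le_card hsub2
      rw [hg0hst] at h3
      omega
    have hinj : G.card ≤ (W.powerset ×ˢ
        ((Finset.Icc 1 n).powerset.filter (fun u => u.card ≤ p - 1))).card := by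
      apply Finset.card_le_card_of_injOn (fun k => (k ∩ W, k \ W))
      · intro k hk
        simp only [mem_coe, mem_product, mem_powerset, mem_filter]
        refine ⟨inter_subset_right, sdiff_subset.trans (hsub k hk), ?_⟩
        have := hres k hk
        omega
      · intro k1 h1 k2 h2 he
        simp only [Prod.mk.injEq] at he
        have e1 : k1 ∩ W ∪ k1 \ W = k1 := by
          ext x; simp only [mem_union, mem_inter, mem_sdiff]; tauto
        have e2 : k2 ∩ W ∪ k2 \ W = k2 := by
          ext x; simp only [mem_union, mem_inter, mem_sdiff]; tauto
        rw [← e1, ← e2, he.1, he.2]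
    have hprod : (W.powerset ×ˢ
        ((Finset.Icc 1 n).powerset.filter (fun u => u.card ≤ p - 1))).card
        ≤ 2 ^ (3 * p) * ∑ i ∈ Finset.range p, n.choose i := by
      rw [Finset.card_product, Finset.card_powerset, cardFilterLe n (p-1)]
      have hpr : p - 1 + 1 = p := by omega
      rw [hpr]
      exact Nat.mul_le_mul_right _ (Nat.pow_le_pow_right (by norm_num) hW3p)
    have hn2 : 2 ^ (3*p+2) * p ^ 2 = 4 * (2 ^ (3*p) * p ^ 2) := by ring
    rw [hn2] at hn
    have hsum1 : ∑ i ∈ Finset.range p, n.choose i ≤ p * n.choose (p - 1) := by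
      calc ∑ i ∈ Finset.range p, n.choose i
          ≤ ∑ _i ∈ Finset.range p, n.choose (p - 1) := by
            apply Finset.sum_le_sum
            intro i hi
            simp only [mem_range] at hi
            apply chooseMono n (p-1) i (by omega)
            have hpp : 2 * (p - 1) ≤ 2 * p := by omega
            have hb1 : 2 ≤ 2 ^ (3*p) := by
              calc 2 = 2 ^ 1 := rfl
                _ ≤ 2 ^ (3*p) := Nat.pow_le_pow_right (by norm_num) (by omega)
            have hb2 : p ≤ p ^ 2 := by nlinarith
            have : 2 * p ≤ 2 ^ (3*p) * p ^ 2 := Nat.mul_le_mul hb1 hb2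
            omega
        _ = p * n.choose (p - 1) := by
            rw [Finset.sum_const, card_range, smul_eq_mul]
    have harith : 2 ^ (3 * p) * (p * n.choose (p - 1)) ≤ n.choose p := by
      have hkey : n.choose p * p = n.choose (p-1) * (n - (p-1)) := by
        have := Nat.choose_succ_right_eq n (p-1)
        have hp1 : p - 1 + 1 = p := by omega
        rwa [hp1] at this
      have hbig : 2 ^ (3 * p) * p ^ 2 ≤ n - (p - 1) := by omega
      have hmul : 2 ^ (3*p) * (p * n.choose (p-1)) * p ≤ n.choose p * p := by
        rw [hkey]
        calc 2 ^ (3*p) * (p * n.choose (p-1)) * p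
            = (2 ^ (3*p) * p ^ 2) * n.choose (p-1) := by ring
          _ ≤ (n - (p-1)) * n.choose (p-1) := Nat.mul_le_mul_right _ hbig
          _ = n.choose (p-1) * (n - (p-1)) := by ring
      exact Nat.le_of_mul_le_mul_right hmul (by omega)
    have hlast : n.choose p ≤ ∑ i ∈ Finset.range (p + 1), n.choose i := by
      apply Finset.single_le_sum (f := fun i => n.choose i)
      · intro i _; exact Nat.zero_le _
      · exact self_mem_range_succ p
    calc G.card ≤ _ := hinj
      _ ≤ 2 ^ (3 * p) * ∑ i ∈ Finset.range p, n.choose i := hprod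
      _ ≤ 2 ^ (3 * p) * (p * n.choose (p - 1)) := Nat.mul_le_mul_left _ hsum1
      _ ≤ n.choose p := harith
      _ ≤ _ := hlast

lemma cardBigSets (n p : ℕ) (hpn : p ≤ n) :
    (((Finset.Icc 1 n).powerset.filter (fun A => n - p ≤ A.card)).card
      = ∑ i ∈ Finset.range (p+1), n.choose i) := by
  rw [← cardFilterLe n p]
  apply Finset.card_bij' (fun s _ => Finset.Icc 1 n \ s) (fun s _ => Finset.Icc 1 n \ s)
  · intro a ha
    simp only [mem_filter, mem_powerset] at ha ⊢
    refine ⟨sdiff_subset, ?_⟩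
    rw [card_sdiff_of_subset ha.1, Nat.card_Icc]
    have := ha.2
    have hc : a.card ≤ n := by
      have := card_le_card ha.1
      rw [Nat.card_Icc] at this
      omega
    omega
  · intro a ha
    simp only [mem_filter, mem_powerset] at ha ⊢
    refine ⟨sdiff_subset, ?_⟩
    rw [card_sdiff_of_subset ha.1, Nat.card_Icc]
    have := ha.2
    omega
  · intro a ha
    simp only [mem_filter, mem_powerset] at ha
    exact Finset.sdiff_sdiff_eq_self ha.1
  · intro a ha
    simp only [mem_filter, mem_powerset] at ha
    exact Finset.sdiff_sdiff_eq_self ha.1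


theorem stmt17 (n p : ℕ) (hp : 1 ≤ p) (hn : 2 ^ (3 * p + 2) * p ^ 2 + p + 1 ≤ n) :
    IsGreatest {m : ℕ | ∃ 𝓕 : Finset (Finset ℕ), (∀ F ∈ 𝓕, F ⊆ Finset.Icc 1 n) ∧
        (∀ A ∈ 𝓕, ∀ B ∈ 𝓕, ∀ C ∈ 𝓕, 3 * n - 6 * p ≤ dd A B C) ∧ 𝓕.card = m}
      (∑ i ∈ Finset.range (p + 1), n.choose i) := by
  simp only [dd]
  have upperG := fun G h1 h2 => upperGlem n p hp hn G h1 h2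
  have cardBig : (((Finset.Icc 1 n).powerset.filter (fun A => n - p ≤ A.card)).card
      = ∑ i ∈ Finset.range (p+1), n.choose i) := by
    apply cardBigSets
    have hpsq0 : p ≤ 2 ^ (3*p+2) * p ^ 2 := by
      calc p ≤ p ^ 2 := by nlinarith
        _ ≤ 2 ^ (3*p+2) * p ^ 2 := Nat.le_mul_of_pos_left _ (Nat.pow_pos (by norm_num))
    omega
  have hpsq : p ≤ 2 ^ (3*p+2) * p ^ 2 := by
    calc p ≤ p ^ 2 := by nlinarith
      _ ≤ 2 ^ (3*p+2) * p ^ 2 := Nat.le_mul_of_pos_left _ (Nat.pow_pos (by norm_num))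
  have h2pn : 2 * p ≤ n := by omega
  constructor
  · refine ⟨(Finset.Icc 1 n).powerset.filter (fun A => n - p ≤ A.card), ?_, ?_, cardBig⟩
    · intro F hF
      simp only [mem_filter, mem_powerset] at hF
      exact hF.1
    · intro A hA B hB C hC
      simp only [mem_filter, mem_powerset] at hA hB hC
      have key : ∀ X Y : Finset ℕ, X ⊆ Finset.Icc 1 n → Y ⊆ Finset.Icc 1 n →
          n - p ≤ X.card → n - p ≤ Y.card → n - 2*p ≤ (X ∩ Y).card := by
        intro X Y hX hY h1 h2
        have h3 := Finset.card_inter_add_card_union X Y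
        have h4 : (X ∪ Y).card ≤ n := by
          have := card_le_card (union_subset hX hY)
          rw [Nat.card_Icc] at this
          omega
        omega
      have k1 := key A B hA.1 hB.1 hA.2 hB.2
      have k2 := key B C hB.1 hC.1 hB.2 hC.2
      have k3 := key C A hC.1 hA.1 hC.2 hA.2
      omega
  · rintro m ⟨F, hFsub, hFd, rfl⟩
    set G := F.image (fun A => Finset.Icc 1 n \ A) with hG
    have hcardG : G.card = F.card := by
      apply Finset.card_image_of_injOn
      intro a ha b hb hab
      have h1 := congrArg (fun x => Finset.Icc 1 n \ x) hab
      simp only at h1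
      rwa [Finset.sdiff_sdiff_eq_self (hFsub a ha),
        Finset.sdiff_sdiff_eq_self (hFsub b hb)] at h1
    rw [← hcardG]
    apply upperG G
    · intro g hg
      simp only [hG, mem_image] at hg
      obtain ⟨A, hA, rfl⟩ := hg
      exact sdiff_subset
    · intro g hg h hh k hk
      simp only [hG, mem_image] at hg hh hk
      obtain ⟨A, hA, rfl⟩ := hg
      obtain ⟨B, hB, rfl⟩ := hh
      obtain ⟨C, hC, rfl⟩ := hk
      have hd := hFd A hA B hB C hC
      have key : ∀ X Y : Finset ℕ, X ⊆ Finset.Icc 1 n → Y ⊆ Finset.Icc 1 n →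
          ((Finset.Icc 1 n \ X) ∪ (Finset.Icc 1 n \ Y)).card = n - (X ∩ Y).card ∧
          (X ∩ Y).card ≤ n := by
        intro X Y hX hY
        have e1 : (Finset.Icc 1 n \ X) ∪ (Finset.Icc 1 n \ Y)
            = Finset.Icc 1 n \ (X ∩ Y) := (sdiff_inter_distrib_right _ _ _).symm
        have hsub2 : X ∩ Y ⊆ Finset.Icc 1 n := inter_subset_left.trans hX
        have hc : (X ∩ Y).card ≤ n := by
          have := card_le_card hsub2
          rw [Nat.card_Icc] at this
          omega
        refine ⟨?_, hc⟩
        rw [e1, card_sdiff_of_subset hsub2, Nat.card_Icc]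
        omega
      obtain ⟨e1, c1⟩ := key A B (hFsub A hA) (hFsub B hB)
      obtain ⟨e2, c2⟩ := key B C (hFsub B hB) (hFsub C hC)
      obtain ⟨e3, c3⟩ := key C A (hFsub C hC) (hFsub A hA)
      rw [e1, e2, e3]
      omega
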